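/- Let H, I : ℝ⁴ → ℝ be continuously differentiable, let γ : ℝ → ℝ⁴ be a differentiable solution of Hamilton's equations for H along which I is constant (I is a first integral on this trajectory), and let ℓ₁, ℓ₂ : ℝ⁴ → ℝ be linear functionals with constants e₁, e₂. Suppose a point x = γ(t₀) is an accumulation point of the section γ(ℝ) ∩ { y : ℓ₁(y) = e₁, ℓ₂(y) = e₂ }, i.e. there is a sequence of points of this intersection, all different from x, converging to x. Then the covectors dH(x), dI(x), ℓ₁, ℓ₂ are linearly dependent. Consequently, if the intersection of a trajectory with a 2-plane contains a curve (hence accumulation points) at which ℓ₁, ℓ₂ are independent of dH, the system admits no second first integral whose differential at those points is independent of dH, ℓ₁, ℓ₂. -/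

import Mathlib

open Filter Asymptotics Topology

/-- If `f` has derivative `L` at `x`, `u k → x` with `u k ≠ x`, and `f` takes the
value `f x` at every `u k`, then `L` applied to the normalized directions tends to `0`. -/
lemma seq_deriv_zero {L : (Fin 4 → ℝ) →L[ℝ] ℝ} {f : (Fin 4 → ℝ) → ℝ} {x : Fin 4 → ℝ}
    (hf : HasFDerivAt f L x) (u : ℕ → Fin 4 → ℝ) (hne : ∀ k, u k ≠ x)
    (hlim : Tendsto u atTop (𝓝 x)) (hval : ∀ k, f (u k) = f x) :
    Tendsto (fun k => L (‖u k - x‖⁻¹ • (u k - x))) atTop (𝓝 0) := by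
  have h1 : (fun y => f y - f x - L (y - x)) =o[𝓝 x] fun y => y - x := hf.isLittleO
  have h2 : (fun k => f (u k) - f x - L (u k - x)) =o[atTop] fun k => u k - x :=
    h1.comp_tendsto hlim
  have h3 : (fun k => L (u k - x)) =o[atTop] fun k => u k - x := by
    have := h2.neg_left
    simp only [hval, sub_self, zero_sub, neg_neg] at this
    exact this
  have h4 := h3.norm_norm.tendsto_div_nhds_zero
  rw [tendsto_zero_iff_norm_tendsto_zero]
  convert h4 using 2 with k
  have hnz : ‖u k - x‖ ≠ 0 := by simpa [sub_eq_zero] using hne k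
  rw [map_smul, smul_eq_mul, Real.norm_eq_abs, Real.norm_eq_abs, abs_mul, abs_inv,
    abs_norm, div_eq_inv_mul]

/-- Phase space `ℝ⁴` with canonical coordinates `(q₁, p₁, q₂, p₂)` indexed by
`0, 1, 2, 3`. If a point `x = γ t₀` of a trajectory `γ` of Hamilton's equations
for `H`, along which the first integral `I` is constant, is an accumulation
point of the section of the trajectory by the 2-plane
`{y : ℓ₁ y = e₁, ℓ₂ y = e₂}`, then the covectors `dH(x)`, `dI(x)`, `ℓ₁`, `ℓ₂`
are linearly dependent. -/
theorem accumulation_point_of_section_implies_dependence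
    (H I : (Fin 4 → ℝ) → ℝ) (hH : ContDiff ℝ 1 H) (hI : ContDiff ℝ 1 I)
    (γ : ℝ → (Fin 4 → ℝ))
    -- Hamilton's equations: q₁' = ∂H/∂p₁, p₁' = −∂H/∂q₁, q₂' = ∂H/∂p₂, p₂' = −∂H/∂q₂
    (hq1 : ∀ t : ℝ, HasDerivAt (fun s => γ s 0)
        (fderiv ℝ H (γ t) (Pi.single 1 1)) t)
    (hp1 : ∀ t : ℝ, HasDerivAt (fun s => γ s 1)
        (-(fderiv ℝ H (γ t) (Pi.single 0 1))) t)
    (hq2 : ∀ t : ℝ, HasDerivAt (fun s => γ s 2)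
        (fderiv ℝ H (γ t) (Pi.single 3 1)) t)
    (hp2 : ∀ t : ℝ, HasDerivAt (fun s => γ s 3)
        (-(fderiv ℝ H (γ t) (Pi.single 2 1))) t)
    -- I is a first integral on this trajectory
    (hIconst : ∀ t : ℝ, I (γ t) = I (γ 0))
    (ℓ₁ ℓ₂ : (Fin 4 → ℝ) →L[ℝ] ℝ) (e₁ e₂ : ℝ)
    (t₀ : ℝ) (x : Fin 4 → ℝ) (hx : x = γ t₀)
    -- x is an accumulation point of the section of the trajectory by the plane
    (u : ℕ → (Fin 4 → ℝ))
    (hu_mem : ∀ k : ℕ, (∃ s : ℝ, γ s = u k) ∧ ℓ₁ (u k) = e₁ ∧ ℓ₂ (u k) = e₂)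
    (hu_ne : ∀ k : ℕ, u k ≠ x)
    (hu_lim : Filter.Tendsto u Filter.atTop (nhds x)) :
    ¬ LinearIndependent ℝ ![fderiv ℝ H x, fderiv ℝ I x, ℓ₁, ℓ₂] := by
  intro li
  have hHd : ∀ y, HasFDerivAt H (fderiv ℝ H y) y := fun y =>
    (hH.differentiable one_ne_zero y).hasFDerivAt
  have hId : ∀ y, HasFDerivAt I (fderiv ℝ I y) y := fun y =>
    (hI.differentiable one_ne_zero y).hasFDerivAt
  -- the velocity field along γ
  set V : ℝ → (Fin 4 → ℝ) := fun t =>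
    ![fderiv ℝ H (γ t) (Pi.single 1 1), -(fderiv ℝ H (γ t) (Pi.single 0 1)),
      fderiv ℝ H (γ t) (Pi.single 3 1), -(fderiv ℝ H (γ t) (Pi.single 2 1))] with hV
  have hγ : ∀ t, HasDerivAt γ (V t) t := by
    intro t
    rw [hasDerivAt_pi]
    intro i
    fin_cases i
    · exact hq1 t
    · exact hp1 t
    · exact hq2 t
    · exact hp2 t
  have hVdecomp : ∀ t, V t = (V t 0) • (Pi.single 0 1 : Fin 4 → ℝ)
      + (V t 1) • (Pi.single 1 1 : Fin 4 → ℝ)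
      + (V t 2) • (Pi.single 2 1 : Fin 4 → ℝ)
      + (V t 3) • (Pi.single 3 1 : Fin 4 → ℝ) := by
    intro t; funext i; fin_cases i <;> simp [Pi.single_apply]
  -- H is conserved along γ
  have hHconst : ∀ t, H (γ t) = H (γ 0) := by
    have hd : ∀ t, HasDerivAt (fun s => H (γ s)) 0 t := by
      intro t
      have h := (hHd (γ t)).comp_hasDerivAt t (hγ t)
      refine h.congr_deriv ?_
      rw [hVdecomp t]
      simp only [map_add, map_smul, smul_eq_mul, hV]
      simp [Matrix.cons_val_zero, Matrix.cons_val_one]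
      ring
    intro t
    exact is_const_of_deriv_eq_zero (fun s => (hd s).differentiableAt)
      (fun s => (hd s).deriv) t 0
  -- values at the sequence points
  have hHval : ∀ k, H (u k) = H x := by
    intro k
    obtain ⟨s, hs⟩ := (hu_mem k).1
    rw [← hs, hx, hHconst s, hHconst t₀]
  have hIval : ∀ k, I (u k) = I x := by
    intro k
    obtain ⟨s, hs⟩ := (hu_mem k).1
    rw [← hs, hx, hIconst s, hIconst t₀]
  have hl1x : ℓ₁ x = e₁ := by
    have h1 : Tendsto (fun k => ℓ₁ (u k)) atTop (𝓝 (ℓ₁ x)) :=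
      (ℓ₁.continuous.tendsto x).comp hu_lim
    have h2 : (fun k => ℓ₁ (u k)) = fun _ => e₁ := funext fun k => (hu_mem k).2.1
    rw [h2] at h1
    exact tendsto_nhds_unique h1 tendsto_const_nhds
  have hl2x : ℓ₂ x = e₂ := by
    have h1 : Tendsto (fun k => ℓ₂ (u k)) atTop (𝓝 (ℓ₂ x)) :=
      (ℓ₂.continuous.tendsto x).comp hu_lim
    have h2 : (fun k => ℓ₂ (u k)) = fun _ => e₂ := funext fun k => (hu_mem k).2.2
    rw [h2] at h1
    exact tendsto_nhds_unique h1 tendsto_const_nhds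
  -- normalized directions
  set v : ℕ → (Fin 4 → ℝ) := fun k => ‖u k - x‖⁻¹ • (u k - x) with hv
  have hnz : ∀ k, ‖u k - x‖ ≠ 0 := fun k => by simpa [sub_eq_zero] using hu_ne k
  have hv_mem : ∀ k, v k ∈ Metric.sphere (0 : Fin 4 → ℝ) 1 := by
    intro k
    simp only [Metric.mem_sphere, dist_zero_right, hv, norm_smul, norm_inv, norm_norm]
    exact inv_mul_cancel₀ (hnz k)
  obtain ⟨w, hw_mem, φ, hφ, hwlim⟩ :=
    (isCompact_sphere (0 : Fin 4 → ℝ) 1).tendsto_subseq hv_mem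
  have hwnorm : ‖w‖ = 1 := by simpa using hw_mem
  -- generic limit argument
  have keyL : ∀ L : (Fin 4 → ℝ) →L[ℝ] ℝ,
      Tendsto (fun k => L (v k)) atTop (𝓝 0) → L w = 0 := by
    intro L hL
    have h1 : Tendsto (fun k => L (v (φ k))) atTop (𝓝 (L w)) :=
      (L.continuous.tendsto w).comp hwlim
    have h2 : Tendsto (fun k => L (v (φ k))) atTop (𝓝 0) :=
      hL.comp hφ.tendsto_atTop
    exact tendsto_nhds_unique h1 h2
  have hHw : fderiv ℝ H x w = 0 :=
    keyL _ (seq_deriv_zero (hHd x) u hu_ne hu_lim hHval)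
  have hIw : fderiv ℝ I x w = 0 :=
    keyL _ (seq_deriv_zero (hId x) u hu_ne hu_lim hIval)
  have hl1w : ℓ₁ w = 0 := by
    refine keyL _ ?_
    have : ∀ k, ℓ₁ (v k) = 0 := by
      intro k
      rw [hv]
      simp only [map_smul, map_sub, (hu_mem k).2.1, hl1x, sub_self, smul_zero]
    simp only [this]
    exact tendsto_const_nhds
  have hl2w : ℓ₂ w = 0 := by
    refine keyL _ ?_
    have : ∀ k, ℓ₂ (v k) = 0 := by
      intro k
      rw [hv]
      simp only [map_smul, map_sub, (hu_mem k).2.2, hl2x, sub_self, smul_zero]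
    simp only [this]
    exact tendsto_const_nhds
  -- dimension count
  have hcard : Fintype.card (Fin 4) = Module.finrank ℝ ((Fin 4 → ℝ) →L[ℝ] ℝ) := by
    rw [← (LinearMap.toContinuousLinearMap :
      ((Fin 4 → ℝ) →ₗ[ℝ] ℝ) ≃ₗ[ℝ] ((Fin 4 → ℝ) →L[ℝ] ℝ)).finrank_eq]
    simp [Module.finrank_linearMap]
  let b := basisOfLinearIndependentOfCardEqFinrank li hcard
  let ev : ((Fin 4 → ℝ) →L[ℝ] ℝ) →ₗ[ℝ] ℝ :=
    { toFun := fun g => g w, map_add' := fun _ _ => rfl, map_smul' := fun _ _ => rfl }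
  have hev : ev = 0 := by
    apply b.ext
    intro i
    have hb : b i = ![fderiv ℝ H x, fderiv ℝ I x, ℓ₁, ℓ₂] i := by
      simp [b, coe_basisOfLinearIndependentOfCardEqFinrank]
    rw [hb]
    fin_cases i <;> simp [ev, hHw, hIw, hl1w, hl2w]
  have hall : ∀ f : (Fin 4 → ℝ) →L[ℝ] ℝ, f w = 0 := by
    intro f
    have := congrFun (congrArg DFunLike.coe hev) f
    simpa [ev] using this
  have hw0 : w = 0 := by
    funext i
    simpa using hall (ContinuousLinearMap.proj i)
  rw [hw0] at hwnorm
  simp at hwnorm
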